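/- Let a > 1 and let (c_j) be a real sequence with c_j = o(a^{-j(j-1)/2}) as j → ∞. Then the entire function φ(z) = ∑_{j=0}^∞ c_j z^j satisfies M(r;φ) = o( exp( (ln r)²/(2 ln a) + (ln r)/2 ) ) as r → ∞, where M(r;φ) = max_{|z|=r} |φ(z)|. -/

import Mathlib

open Filter Finset

private lemma cast_tri (j : ℕ) : ((j * (j - 1) / 2 : ℕ) : ℝ) = (j : ℝ) * ((j : ℝ) - 1) / 2 := by
  cases j with
  | zero => simp
  | succ k =>
    have h2 : 2 ∣ (k + 1) * k := by
      rw [Nat.mul_comm]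
      exact (Nat.even_mul_succ_self k).two_dvd
    simp only [Nat.add_sub_cancel]
    rw [Nat.cast_div h2 (by norm_num)]
    push_cast
    ring

private lemma exp_sq_le {L : ℝ} (hL : 0 < L) (m : ℕ) (t : ℝ) (h : (m : ℝ) ≤ t) :
    Real.exp (-(L/2) * t^2) ≤ (Real.exp (-(L/2)))^m := by
  rw [← Real.exp_nat_mul]
  apply Real.exp_le_exp.mpr
  have h0 : (0:ℝ) ≤ (m:ℝ) := Nat.cast_nonneg m
  have h1 : (m:ℝ) ≤ (m:ℝ)^2 := by
    have := Nat.le_self_pow (two_ne_zero) m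
    exact_mod_cast this
  have h2 : (m:ℝ)^2 ≤ t^2 := by nlinarith
  nlinarith

private lemma gauss_summable {L : ℝ} (hL : 0 < L) (x : ℝ) :
    Summable fun j : ℕ => Real.exp (-(L/2) * ((j:ℝ) - x)^2) := by
  set q := Real.exp (-(L/2)) with hq
  have hq0 : 0 ≤ q := (Real.exp_pos _).le
  have hq1 : q < 1 := Real.exp_lt_one_iff.mpr (by linarith)
  set n := ⌈x⌉₊ with hn
  refine Summable.of_nonneg_of_le (fun j => (Real.exp_pos _).le) (fun j => ?_)
    ((summable_geometric_of_lt_one hq0 hq1).mul_left ((q⁻¹)^n))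
  · 
    rcases le_or_gt (j : ℝ) (n : ℝ) with h | h
    · have : Real.exp (-(L/2) * ((j:ℝ) - x)^2) ≤ 1 := by
        rw [Real.exp_le_one_iff]; nlinarith [sq_nonneg ((j:ℝ) - x)]
      have h1 : (1:ℝ) ≤ (q⁻¹)^n * q^j := by
        rw [inv_pow, ← div_eq_inv_mul, le_div_iff₀ (pow_pos (Real.exp_pos _) n), one_mul]
        exact pow_le_pow_of_le_one hq0 hq1.le (by exact_mod_cast h)
      linarith
    · have hjn : n ≤ j := le_of_lt (by exact_mod_cast h)
      have hx : x ≤ (n:ℝ) := Nat.le_ceil x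
      have := exp_sq_le hL (j - n) ((j:ℝ) - x) (by
        rw [Nat.cast_sub hjn]; linarith)
      calc Real.exp (-(L/2) * ((j:ℝ) - x)^2) ≤ q^(j-n) := this
      _ = (q⁻¹)^n * q^j := by
        rw [inv_pow, ← div_eq_inv_mul, eq_div_iff (by positivity), ← pow_add]
        congr 1
        omega

private lemma gauss_tsum_le {L : ℝ} (hL : 0 < L) {x : ℝ} (hx : 0 ≤ x) :
    (∑' j : ℕ, Real.exp (-(L/2) * ((j:ℝ) - x)^2)) ≤ 2 / (1 - Real.exp (-(L/2))) := by
  set q := Real.exp (-(L/2)) with hq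
  have hq0 : 0 ≤ q := (Real.exp_pos _).le
  have hq1 : q < 1 := Real.exp_lt_one_iff.mpr (by linarith)
  set n := ⌈x⌉₊ with hn
  set f := fun j : ℕ => Real.exp (-(L/2) * ((j:ℝ) - x)^2) with hf
  have hfs : Summable f := gauss_summable hL x
  have hsplit := hfs.sum_add_tsum_nat_add n
  have hgeo : Summable fun k : ℕ => q^k := summable_geometric_of_lt_one hq0 hq1
  have hqt : ∑' k : ℕ, q^k = (1-q)⁻¹ := tsum_geometric_of_lt_one hq0 hq1
  have hhead : ∑ j ∈ range n, f j ≤ (1-q)⁻¹ := by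
    have h1 : ∑ j ∈ range n, f j ≤ ∑ j ∈ range n, q^(n-1-j) := by
      apply Finset.sum_le_sum
      intro j hj
      have hjn : j < n := Finset.mem_range.mp hj
      have hjx : (j:ℝ) < x := Nat.lt_ceil.mp hjn
      have hnx : (n:ℝ) < x + 1 := Nat.ceil_lt_add_one hx
      have hcast : ((n-1-j : ℕ):ℝ) = (n:ℝ) - 1 - j := by
        have : 1 + j ≤ n := by omega
        rw [Nat.sub_sub, Nat.cast_sub this]
        push_cast; ring
      have hkey := exp_sq_le hL (n-1-j) (x - (j:ℝ)) (by rw [hcast]; linarith)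
      rw [show -(L/2) * (x-(j:ℝ))^2 = -(L/2) * ((j:ℝ)-x)^2 by ring] at hkey
      exact hkey
    have h2 : ∑ j ∈ range n, q^(n-1-j) = ∑ j ∈ range n, q^j :=
      Finset.sum_range_reflect (fun j => q^j) n
    have h3 : ∑ j ∈ range n, q^j ≤ ∑' k : ℕ, q^k :=
      Summable.sum_le_tsum (range n) (fun k _ => by positivity) hgeo
    linarith [hqt ▸ h3, h2 ▸ h1]
  have htail : (∑' k : ℕ, f (k + n)) ≤ (1-q)⁻¹ := by
    have h1 : ∀ k : ℕ, f (k + n) ≤ q^k := by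
      intro k
      have hxn : x ≤ (n:ℝ) := Nat.le_ceil x
      exact exp_sq_le hL k (((k + n : ℕ) : ℝ) - x) (by push_cast; linarith)
    calc (∑' k : ℕ, f (k + n)) ≤ ∑' k : ℕ, q^k :=
      Summable.tsum_le_tsum h1 ((summable_nat_add_iff n).mpr hfs) hgeo
    _ = (1-q)⁻¹ := hqt
  calc (∑' j : ℕ, f j) = ∑ j ∈ range n, f j + ∑' k : ℕ, f (k + n) := hsplit.symm
  _ ≤ (1-q)⁻¹ + (1-q)⁻¹ := add_le_add hhead htail
  _ = 2 / (1-q) := by ring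

private lemma term_eq {a : ℝ} (ha : 1 < a) {r : ℝ} (hr : 0 < r) (j : ℕ) :
    (a ^ (j * (j - 1) / 2))⁻¹ * r ^ j
      = Real.exp ((Real.log r)^2/(2*Real.log a) + Real.log r/2 + Real.log a/8)
        * Real.exp (-(Real.log a/2) * ((j:ℝ) - (Real.log r/Real.log a + 1/2))^2) := by
  have ha0 : 0 < a := lt_trans one_pos ha
  have hL : 0 < Real.log a := Real.log_pos ha
  set L := Real.log a
  set t := Real.log r
  have h1 : a ^ (j * (j - 1) / 2) = Real.exp (((j * (j - 1) / 2 : ℕ):ℝ) * L) := by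
    rw [Real.exp_nat_mul, Real.exp_log ha0]
  have h2 : r ^ j = Real.exp ((j:ℝ) * t) := by
    rw [Real.exp_nat_mul, Real.exp_log hr]
  rw [h1, h2, ← Real.exp_neg, ← Real.exp_add, ← Real.exp_add, cast_tri]
  congr 1
  field_simp
  ring

theorem max_modulus_littleO (a : ℝ) (ha : 1 < a) (c : ℕ → ℝ)
    (hc : (fun j : ℕ => c j) =o[atTop] fun j : ℕ => (a ^ (j * (j - 1) / 2))⁻¹) :
    (fun r : ℝ => ⨆ z : Metric.sphere (0 : ℂ) r, ‖∑' j : ℕ, (c j : ℂ) * (z : ℂ) ^ j‖)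
      =o[atTop] fun r : ℝ =>
        Real.exp ((Real.log r) ^ 2 / (2 * Real.log a) + Real.log r / 2) := by
  have ha0 : 0 < a := lt_trans one_pos ha
  have hL : 0 < Real.log a := Real.log_pos ha
  set L := Real.log a with hLdef
  set q := Real.exp (-(L/2)) with hqdef
  have hq0 : 0 < q := Real.exp_pos _
  have hq1 : q < 1 := Real.exp_lt_one_iff.mpr (by linarith)
  set C := Real.exp (L/8) * (2/(1-q)) with hCdef
  have hC : 0 < C := by
    have : 0 < 1 - q := by linarith
    positivity
  rw [Asymptotics.isLittleO_iff]
  intro ε hε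
  set ε' := ε / (2*C) with hε'def
  have hε' : 0 < ε' := by positivity
  obtain ⟨N, hN⟩ := eventually_atTop.mp (hc.def hε')
  set K := ∑ j ∈ range N, |c j| with hKdef
  have hK : 0 ≤ K := Finset.sum_nonneg (fun j _ => abs_nonneg _)
  -- eventual domination of the polynomial head
  have hpoly : Tendsto (fun s : ℝ => s^2/(2*L) + s/2 - N*s) atTop atTop := by
    apply tendsto_atTop_mono' atTop ?_ tendsto_id
    filter_upwards [eventually_ge_atTop (2*L*(N+1)), eventually_ge_atTop (0:ℝ)] with s hs hs0
    have h1 : (N+1)*s ≤ s^2/(2*L) := by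
      rw [le_div_iff₀ (by positivity)]
      nlinarith
    simp only [id]
    nlinarith
  have htend : Tendsto (fun r : ℝ => (Real.log r)^2/(2*L) + Real.log r/2 - N*Real.log r)
      atTop atTop := hpoly.comp Real.tendsto_log_atTop
  filter_upwards [htend.eventually_ge_atTop (Real.log (2*K/ε + 1)), eventually_ge_atTop (1:ℝ)]
    with r hr1 hr
  have hr0 : 0 < r := lt_of_lt_of_le one_pos hr
  set t := Real.log r with htdef
  have ht0 : 0 ≤ t := Real.log_nonneg hr
  set Q := t^2/(2*L) + t/2 with hQdef
  set x := t/L + 1/2 with hxdef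
  have hx0 : 0 ≤ x := by positivity
  set h := fun j : ℕ => (a ^ (j * (j - 1) / 2))⁻¹ * r ^ j with hhdef
  set f := fun j : ℕ => Real.exp (-(L/2) * ((j:ℝ) - x)^2) with hfdef
  have hterm : ∀ j, h j = Real.exp (Q + L/8) * f j := fun j => term_eq ha hr0 j
  have hfS : Summable f := gauss_summable hL x
  have hhS : Summable h := by
    rw [show h = fun j => Real.exp (Q + L/8) * f j from funext hterm]
    exact hfS.mul_left _
  have hhpos : ∀ j, 0 ≤ h j := by
    intro j; rw [hterm j]; positivity
  have hhsum : (∑' j, h j) ≤ C * Real.exp Q := by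
    calc (∑' j, h j) = Real.exp (Q + L/8) * ∑' j, f j := by
          rw [show h = fun j => Real.exp (Q + L/8) * f j from funext hterm]
          exact tsum_mul_left
    _ ≤ Real.exp (Q + L/8) * (2/(1-q)) := by
          apply mul_le_mul_of_nonneg_left (gauss_tsum_le hL hx0) (Real.exp_pos _).le
    _ = C * Real.exp Q := by rw [hCdef, Real.exp_add]; ring
  -- summability of the coefficient series
  set g := fun j : ℕ => |c j| * r ^ j with hgdef
  have hgS : Summable g := by
    have hO : (fun j => c j * r ^ j) =O[cofinite] h := by
      rw [Nat.cofinite_eq_atTop]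
      exact (hc.isBigO.mul (Asymptotics.isBigO_refl (fun j : ℕ => r ^ j) atTop))
    have h1 : Summable (fun j => c j * r ^ j) := summable_of_isBigO hhS hO
    have h2 := h1.abs
    apply h2.congr
    intro j
    rw [abs_mul, abs_of_nonneg (pow_nonneg hr0.le j)]
  have hgpos : ∀ j, 0 ≤ g j := fun j => mul_nonneg (abs_nonneg _) (pow_nonneg hr0.le j)
  -- the sup over the sphere is bounded by ∑' g
  have hsphere : Nonempty (Metric.sphere (0:ℂ) r) :=
    (NormedSpace.sphere_nonempty.mpr hr0.le).to_subtype
  have hsup : (⨆ z : Metric.sphere (0:ℂ) r, ‖∑' j : ℕ, (c j : ℂ) * (z : ℂ) ^ j‖) ≤ ∑' j, g j := by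
    apply ciSup_le
    intro z
    have hz : ‖(z : ℂ)‖ = r := mem_sphere_zero_iff_norm.mp z.2
    have hnorm : ∀ j : ℕ, ‖(c j : ℂ) * (z : ℂ) ^ j‖ = g j := by
      intro j
      rw [norm_mul, norm_pow, hz, Complex.norm_real, Real.norm_eq_abs]
    have hS : Summable fun j : ℕ => ‖(c j : ℂ) * (z : ℂ) ^ j‖ := by
      apply hgS.congr; intro j; rw [hnorm j]
    calc ‖∑' j : ℕ, (c j : ℂ) * (z : ℂ) ^ j‖ ≤ ∑' j, ‖(c j : ℂ) * (z : ℂ) ^ j‖ :=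
          norm_tsum_le_tsum_norm hS
    _ = ∑' j, g j := tsum_congr hnorm
  -- split g into head and tail
  have hsplit := hgS.sum_add_tsum_nat_add N
  have hhead : ∑ j ∈ range N, g j ≤ K * r ^ N := by
    calc ∑ j ∈ range N, g j ≤ ∑ j ∈ range N, |c j| * r ^ N := by
          apply Finset.sum_le_sum
          intro j hj
          exact mul_le_mul_of_nonneg_left
            (pow_le_pow_right₀ hr (le_of_lt (Finset.mem_range.mp hj))) (abs_nonneg _)
    _ = K * r ^ N := by rw [hKdef, ← Finset.sum_mul]
  have htail : (∑' k : ℕ, g (k + N)) ≤ ε' * (C * Real.exp Q) := by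
    have h1 : ∀ k : ℕ, g (k + N) ≤ ε' * h (k + N) := by
      intro k
      have := hN (k + N) (Nat.le_add_left N k)
      rw [Real.norm_eq_abs, Real.norm_eq_abs,
        abs_of_pos (by positivity : (0:ℝ) < (a ^ ((k+N) * ((k+N) - 1) / 2))⁻¹)] at this
      calc g (k + N) = |c (k+N)| * r ^ (k+N) := rfl
      _ ≤ (ε' * (a ^ ((k+N) * ((k+N) - 1) / 2))⁻¹) * r ^ (k+N) :=
          mul_le_mul_of_nonneg_right this (pow_nonneg hr0.le _)
      _ = ε' * h (k + N) := by rw [hhdef]; ring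
    have h2 : Summable fun k : ℕ => ε' * h (k + N) :=
      ((summable_nat_add_iff N).mpr hhS).mul_left ε'
    calc (∑' k : ℕ, g (k + N)) ≤ ∑' k : ℕ, ε' * h (k + N) :=
          Summable.tsum_le_tsum h1 ((summable_nat_add_iff N).mpr hgS) h2
    _ = ε' * ∑' k : ℕ, h (k + N) := tsum_mul_left
    _ ≤ ε' * ∑' j, h j := by
          apply mul_le_mul_of_nonneg_left ?_ hε'.le
          have := hhS.sum_add_tsum_nat_add N
          have hpos : 0 ≤ ∑ j ∈ range N, h j := Finset.sum_nonneg (fun j _ => hhpos j)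
          linarith
    _ ≤ ε' * (C * Real.exp Q) := mul_le_mul_of_nonneg_left hhsum hε'.le
  -- the polynomial head is eventually small
  have hheadsmall : K * r ^ N ≤ (ε/2) * Real.exp Q := by
    have hrN : r ^ N = Real.exp ((N:ℝ) * t) := by
      rw [Real.exp_nat_mul, htdef, Real.exp_log hr0]
    have hexp : 2*K/ε + 1 ≤ Real.exp (Q - (N:ℝ) * t) := by
      rw [← Real.exp_log (show (0:ℝ) < 2*K/ε + 1 by positivity)]
      apply Real.exp_le_exp.mpr
      rw [hQdef]
      linarith [hr1]
    have hKle : K ≤ (ε/2) * (2*K/ε + 1) := by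
      have : (ε/2) * (2*K/ε + 1) = K + ε/2 := by field_simp
      linarith
    calc K * r ^ N ≤ ((ε/2) * (2*K/ε + 1)) * r ^ N :=
          mul_le_mul_of_nonneg_right hKle (pow_nonneg hr0.le N)
    _ ≤ ((ε/2) * Real.exp (Q - (N:ℝ)*t)) * r ^ N := by
          apply mul_le_mul_of_nonneg_right ?_ (pow_nonneg hr0.le N)
          exact mul_le_mul_of_nonneg_left hexp (by linarith)
    _ = (ε/2) * Real.exp Q := by
          rw [hrN, mul_assoc, ← Real.exp_add]
          congr 2
          ring
  -- put everything together
  have hεC : ε' * (C * Real.exp Q) = (ε/2) * Real.exp Q := by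
    rw [hε'def]
    field_simp
  have hfinal : (⨆ z : Metric.sphere (0:ℂ) r, ‖∑' j : ℕ, (c j : ℂ) * (z : ℂ) ^ j‖)
      ≤ ε * Real.exp Q := by
    calc (⨆ z : Metric.sphere (0:ℂ) r, ‖∑' j : ℕ, (c j : ℂ) * (z : ℂ) ^ j‖)
        ≤ ∑' j, g j := hsup
    _ = ∑ j ∈ range N, g j + ∑' k : ℕ, g (k + N) := hsplit.symm
    _ ≤ K * r ^ N + ε' * (C * Real.exp Q) := add_le_add hhead htail
    _ ≤ (ε/2) * Real.exp Q + (ε/2) * Real.exp Q := by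
          rw [hεC] at *; exact add_le_add hheadsmall le_rfl
    _ = ε * Real.exp Q := by ring
  have hsupnn : 0 ≤ (⨆ z : Metric.sphere (0:ℂ) r, ‖∑' j : ℕ, (c j : ℂ) * (z : ℂ) ^ j‖) :=
    Real.iSup_nonneg (fun z => norm_nonneg _)
  rw [Real.norm_eq_abs, Real.norm_eq_abs, abs_of_nonneg hsupnn,
    abs_of_pos (Real.exp_pos _)]
  exact hfinal
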